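/- Let ε > 0 and let (a_n) be an increasing sequence of real numbers with a_n ≥ n^{1+ε} for all sufficiently large n and a_n > 2^n for all n. Then for all sufficiently large N, ∑_{n=N}^∞ a_n^{−1 + 1/(log log a_n)^{3+ε}} < a_N^{−1 + 1/(log log a_N)^{3+ε/2}}. -/

import Mathlib

open Filter Real Finset

/-- sharper tail estimate under `a n > 2 ^ n`. -/
theorem stmt9 (ε : ℝ) (hε : 0 < ε) (a : ℕ → ℝ) (hmono : Monotone a)
    (hev : ∀ᶠ n : ℕ in Filter.atTop, (n : ℝ) ^ (1 + ε) ≤ a n)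
    (hgt : ∀ n : ℕ, (2 : ℝ) ^ n < a n) :
    ∀ᶠ N : ℕ in Filter.atTop,
      (∑' n : ℕ, a (N + n) ^ (-1 + 1 / Real.log (Real.log (a (N + n))) ^ (3 + ε)))
        < a N ^ (-1 + 1 / Real.log (Real.log (a N)) ^ (3 + ε / 2)) := by
  have hpow1 : ∀ n : ℕ, (1 : ℝ) ≤ 2 ^ n := fun n => one_le_pow₀ one_le_two
  have hpos : ∀ n, (0 : ℝ) < a n := fun n => lt_trans (by positivity) (hgt n)
  have h1lt : ∀ n, (1 : ℝ) < a n := fun n => lt_of_le_of_lt (hpow1 n) (hgt n)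
  -- the key eventual condition, as a condition on `t = log (a N)`
  have hkey : ∀ᶠ t : ℝ in atTop,
      2 ≤ Real.log t ∧
      t / Real.log 2 + 5 <
        Real.exp (t * (1 / Real.log t ^ (3 + ε / 2) - 1 / Real.log t ^ (3 + ε))) := by
    have h1 : ∀ᶠ t : ℝ in atTop, 2 ≤ Real.log t :=
      Real.tendsto_log_atTop.eventually_ge_atTop 2
    have h2 : ∀ᶠ t : ℝ in atTop, 2 ≤ Real.log t ^ (ε / 2) :=
      ((tendsto_rpow_atTop (half_pos hε)).comp Real.tendsto_log_atTop).eventually_ge_atTop 2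
    have h3 : ∀ᶠ t : ℝ in atTop, 2 * Real.log t ^ (4 + ε) ≤ t := by
      have hlo := (isLittleO_log_rpow_rpow_atTop (4 + ε) one_pos).bound
        (c := 1 / 2) (by norm_num)
      filter_upwards [hlo, eventually_ge_atTop (0 : ℝ)] with x hx hx0
      rw [Real.rpow_one] at hx
      have hx' : |Real.log x ^ (4 + ε)| ≤ 1 / 2 * |x| := by
        simpa [Real.norm_eq_abs] using hx
      have h1 : Real.log x ^ (4 + ε) ≤ |Real.log x ^ (4 + ε)| := le_abs_self _
      rw [abs_of_nonneg hx0] at hx'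
      linarith
    filter_upwards [h1, h2, h3, eventually_ge_atTop (4 : ℝ)] with t hL2 hLe hLt ht4
    refine ⟨hL2, ?_⟩
    set L := Real.log t with hLdef
    have hL0 : 0 < L := by linarith
    have ht0 : 0 < t := by linarith
    have hL3e : 0 < L ^ (3 + ε) := Real.rpow_pos_of_pos hL0 _
    have hL3e2 : 0 < L ^ (3 + ε / 2) := Real.rpow_pos_of_pos hL0 _
    have hLe2 : 0 < L ^ (ε / 2) := Real.rpow_pos_of_pos hL0 _
    have hsplit : L ^ (3 + ε) = L ^ (3 + ε / 2) * L ^ (ε / 2) := by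
      rw [← Real.rpow_add hL0]; ring_nf
    have hΔ : 1 / L ^ (3 + ε / 2) - 1 / L ^ (3 + ε) = (L ^ (ε / 2) - 1) / L ^ (3 + ε) := by
      rw [hsplit]; field_simp
    have hL4 : L ^ ((4 : ℝ) + ε) = L * L ^ (3 + ε) := by
      rw [show (4 : ℝ) + ε = 1 + (3 + ε) by ring, Real.rpow_add hL0, Real.rpow_one]
    have hkey2 : 2 * L ≤ t * ((L ^ (ε / 2) - 1) / L ^ (3 + ε)) := by
      rw [mul_div_assoc', le_div_iff₀ hL3e]
      nlinarith [hLt, hL4, hLe, ht0.le, hL3e]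
    have hexp2 : Real.exp (2 * L) ≤
        Real.exp (t * (1 / L ^ (3 + ε / 2) - 1 / L ^ (3 + ε))) := by
      rw [hΔ]; exact Real.exp_le_exp.2 hkey2
    have hexpL : Real.exp (2 * L) = t * t := by
      rw [two_mul, Real.exp_add, Real.exp_log ht0]
    have hlog2 : (0.6931471803 : ℝ) < Real.log 2 := Real.log_two_gt_d9
    have htd : t / Real.log 2 < 2 * t := by
      rw [div_lt_iff₀ (by linarith)]
      nlinarith
    nlinarith [hexp2, hexpL]
  -- `log (a N) → ∞`
  have hatend : Tendsto (fun N : ℕ => Real.log (a N)) atTop atTop := by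
    apply Real.tendsto_log_atTop.comp
    apply tendsto_atTop_mono (f := fun n : ℕ => (n : ℝ)) _ tendsto_natCast_atTop_atTop
    intro n
    have h1 : (n : ℝ) ≤ 2 ^ n := by exact_mod_cast (Nat.lt_two_pow_self (n := n)).le
    exact h1.trans (hgt n).le
  filter_upwards [hatend.eventually hkey] with N hN
  obtain ⟨hL2, hexp⟩ := hN
  set t := Real.log (a N) with htdef
  set L := Real.log t with hLdef
  have haN : 0 < a N := hpos N
  have ht0 : 0 < t := Real.log_pos (h1lt N)
  have hL0 : 0 < L := by linarith
  have hL3e : 0 < L ^ (3 + ε) := Real.rpow_pos_of_pos hL0 _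
  set e : ℝ := -1 + 1 / L ^ (3 + ε) with hedef
  have heh : e ≤ -(1 / 2) := by
    have h1 : L ≤ L ^ (3 + ε) := by
      nth_rewrite 1 [← Real.rpow_one L]
      exact Real.rpow_le_rpow_of_exponent_le (by linarith) (by linarith)
    have h2 : (2 : ℝ) ≤ L ^ (3 + ε) := by linarith
    have h3 : 1 / L ^ (3 + ε) ≤ 1 / 2 := by
      rw [div_le_div_iff₀ hL3e (by norm_num)]; linarith
    simp only [hedef]; linarith
  have heneg : e < 0 := lt_of_le_of_lt heh (by norm_num)
  -- term bound
  have hterm : ∀ m, N ≤ m → ∀ x : ℝ, 0 < x → x ≤ a m →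
      a m ^ (-1 + 1 / Real.log (Real.log (a m)) ^ (3 + ε)) ≤ x ^ e := by
    intro m hm x hx hxm
    have hNm : a N ≤ a m := hmono hm
    have hlm : t ≤ Real.log (a m) := Real.log_le_log haN hNm
    have hLm : L ≤ Real.log (Real.log (a m)) := Real.log_le_log ht0 hlm
    have hp : L ^ (3 + ε) ≤ Real.log (Real.log (a m)) ^ (3 + ε) :=
      Real.rpow_le_rpow hL0.le hLm (by linarith)
    have hfrac : 1 / Real.log (Real.log (a m)) ^ (3 + ε) ≤ 1 / L ^ (3 + ε) :=
      one_div_le_one_div_of_le hL3e hp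
    have h1 : a m ^ (-1 + 1 / Real.log (Real.log (a m)) ^ (3 + ε)) ≤ a m ^ e :=
      Real.rpow_le_rpow_of_exponent_le (h1lt m).le (by simp only [hedef]; linarith)
    exact h1.trans (Real.rpow_le_rpow_of_nonpos hx hxm heneg.le)
  -- the cut point
  set K : ℕ := ⌈t / Real.log 2⌉₊ with hKdef
  have hlog2 : (0 : ℝ) < Real.log 2 := Real.log_pos one_lt_two
  have haK : a N ≤ 2 ^ K := by
    have h1 : t ≤ K * Real.log 2 := by
      rw [← div_le_iff₀ hlog2]; exact Nat.le_ceil _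
    calc a N = Real.exp t := (Real.exp_log haN).symm
      _ ≤ Real.exp (K * Real.log 2) := Real.exp_le_exp.2 h1
      _ = 2 ^ K := by rw [← Real.log_pow, Real.exp_log (by positivity)]
  -- geometric ratio
  set r : ℝ := (2 : ℝ) ^ e with hrdef
  have hr0 : 0 < r := Real.rpow_pos_of_pos two_pos e
  have hr1 : r < 1 := Real.rpow_lt_one_of_one_lt_of_neg one_lt_two heneg
  have hr34 : r ≤ 3 / 4 := by
    have h1 : r ≤ (2 : ℝ) ^ (-(1 / 2) : ℝ) :=
      Real.rpow_le_rpow_of_exponent_le one_le_two heh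
    have h2 : (2 : ℝ) ^ (-(1 / 2) : ℝ) * (2 : ℝ) ^ (-(1 / 2) : ℝ) = 1 / 2 := by
      rw [← Real.rpow_add two_pos]
      norm_num [Real.rpow_neg_one]
    have h3 : (0 : ℝ) < (2 : ℝ) ^ (-(1 / 2) : ℝ) := Real.rpow_pos_of_pos two_pos _
    nlinarith
  set f : ℕ → ℝ :=
    fun n => a (N + n) ^ (-1 + 1 / Real.log (Real.log (a (N + n))) ^ (3 + ε)) with hfdef
  have hf0 : ∀ n, 0 ≤ f n := fun n => Real.rpow_nonneg (hpos _).le _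
  set A : ℝ := a N ^ e with hAdef
  have hA0 : 0 < A := Real.rpow_pos_of_pos haN e
  have hshift : ∀ j : ℕ, f (j + K) ≤ A * r ^ j := by
    intro j
    have h2le : a N * 2 ^ j ≤ a (N + (j + K)) := by
      calc a N * 2 ^ j ≤ 2 ^ K * 2 ^ j :=
            mul_le_mul_of_nonneg_right haK (by positivity)
        _ = 2 ^ (K + j) := (pow_add 2 K j).symm
        _ ≤ 2 ^ (N + (j + K)) := by
            apply pow_le_pow_right₀ one_le_two
            omega
        _ ≤ a (N + (j + K)) := (hgt _).le
    have hb := hterm (N + (j + K)) (Nat.le_add_right _ _) (a N * 2 ^ j) (by positivity) h2le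
    calc f (j + K) ≤ (a N * 2 ^ j) ^ e := hb
      _ = A * ((2 : ℝ) ^ j) ^ e := Real.mul_rpow haN.le (by positivity)
      _ = A * r ^ j := by
          rw [← Real.rpow_natCast 2 j, ← Real.rpow_mul (by norm_num), mul_comm (j : ℝ) e,
            Real.rpow_mul (by norm_num), Real.rpow_natCast]
  have hgeo : Summable (fun j : ℕ => A * r ^ j) :=
    (summable_geometric_of_lt_one hr0.le hr1).mul_left _
  have hsum_shift : Summable (fun j => f (j + K)) :=
    Summable.of_nonneg_of_le (fun j => hf0 _) hshift hgeo
  have hsum : Summable f := (summable_nat_add_iff K).mp hsum_shift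
  have hsplitsum : ∑' n, f n = (∑ i ∈ Finset.range K, f i) + ∑' j, f (j + K) :=
    (Summable.sum_add_tsum_nat_add K hsum).symm
  have hS1 : (∑ i ∈ Finset.range K, f i) ≤ K * A := by
    have h1 : ∀ i ∈ Finset.range K, f i ≤ A :=
      fun i _ => hterm (N + i) (Nat.le_add_right _ _) (a N) haN (hmono (Nat.le_add_right _ _))
    calc (∑ i ∈ Finset.range K, f i) ≤ ∑ _i ∈ Finset.range K, A :=
          Finset.sum_le_sum h1
      _ = K * A := by simp [mul_comm]
  have hS2 : (∑' j, f (j + K)) ≤ A * (1 - r)⁻¹ := by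
    calc (∑' j, f (j + K)) ≤ ∑' j : ℕ, A * r ^ j := Summable.tsum_le_tsum hshift hsum_shift hgeo
      _ = A * (1 - r)⁻¹ := by rw [tsum_mul_left, tsum_geometric_of_lt_one hr0.le hr1]
  have hinv4 : (1 - r)⁻¹ ≤ 4 := by
    rw [inv_le_comm₀ (by linarith) (by norm_num)]
    linarith
  have hKb : (K : ℝ) < t / Real.log 2 + 1 :=
    Nat.ceil_lt_add_one (div_nonneg ht0.le hlog2.le)
  have hfinal : ∑' n, f n < A * Real.exp (t * (1 / L ^ (3 + ε / 2) - 1 / L ^ (3 + ε))) := by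
    rw [hsplitsum]
    have h1 : (∑ i ∈ Finset.range K, f i) + ∑' j, f (j + K) ≤ A * (t / Real.log 2 + 5) := by
      have : (K : ℝ) * A ≤ (t / Real.log 2 + 1) * A := by
        apply mul_le_mul_of_nonneg_right hKb.le hA0.le
      nlinarith [hS1, hS2, hA0, hinv4]
    calc (∑ i ∈ Finset.range K, f i) + ∑' j, f (j + K) ≤ A * (t / Real.log 2 + 5) := h1
      _ < A * Real.exp (t * (1 / L ^ (3 + ε / 2) - 1 / L ^ (3 + ε))) := by
          exact mul_lt_mul_of_pos_left hexp hA0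
  have hAe : A * Real.exp (t * (1 / L ^ (3 + ε / 2) - 1 / L ^ (3 + ε)))
      = a N ^ (-1 + 1 / L ^ (3 + ε / 2)) := by
    rw [hAdef, Real.rpow_def_of_pos haN, Real.rpow_def_of_pos haN, ← Real.exp_add, ← htdef]
    simp only [hedef]; ring_nf
  calc (∑' n : ℕ, a (N + n) ^ (-1 + 1 / Real.log (Real.log (a (N + n))) ^ (3 + ε)))
      = ∑' n, f n := rfl
    _ < A * Real.exp (t * (1 / L ^ (3 + ε / 2) - 1 / L ^ (3 + ε))) := hfinal
    _ = a N ^ (-1 + 1 / L ^ (3 + ε / 2)) := hAe
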